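/- Let k ≥ 2 and n ≥ 1 be integers, and let α_0, α_1, …, α_n be natural numbers satisfying α_0 = 1, α_t ≥ k·α_{t−1} for all 1 ≤ t ≤ n, and Σ_{t=0}^{n} α_t · k^t = (2k+1)^n. Then α_n ≥ (2k+1)^n · k^n · (k^2 − 1) / (k^{2(n+1)} − 1). -/
import Mathlib


/-- Let `k ≥ 2`, `n ≥ 1` and natural numbers `α_0, …, α_n` with `α_0 = 1`,
`α_t ≥ k·α_{t−1}` for `1 ≤ t ≤ n`, and `∑_{t=0}^n α_t·k^t = (2k+1)^n`. Then
`α_n ≥ (2k+1)^n·k^n·(k² − 1)/(k^{2(n+1)} − 1)`. -/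
theorem alpha_n_lower_bound (k n : ℕ) (hk : 2 ≤ k) (hn : 1 ≤ n) (a : ℕ → ℕ)
    (h0 : a 0 = 1)
    (hgrow : ∀ t, 1 ≤ t → t ≤ n → k * a (t - 1) ≤ a t)
    (hsum : ∑ t ∈ Finset.range (n + 1), a t * k ^ t = (2 * k + 1) ^ n) :
    ((2 * (k : ℝ) + 1) ^ n * (k : ℝ) ^ n * ((k : ℝ) ^ 2 - 1)) /
        ((k : ℝ) ^ (2 * (n + 1)) - 1) ≤ (a n : ℝ) := by
  have key : ∀ d t, t + d ≤ n → k ^ d * a t ≤ a (t + d) := by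
    intro d
    induction d with
    | zero => intro t _; simp
    | succ d ih =>
      intro t h
      have h1 : t + d ≤ n := by omega
      have h2 := hgrow (t + d + 1) (by omega) (by omega)
      simp only [Nat.add_sub_cancel] at h2
      calc k ^ (d + 1) * a t = k * (k ^ d * a t) := by ring
        _ ≤ k * a (t + d) := Nat.mul_le_mul_left _ (ih t h1)
        _ ≤ a (t + d + 1) := h2
  have key2 : ∀ t, t ≤ n → k ^ (n - t) * a t ≤ a n := by
    intro t ht
    have := key (n - t) t (by omega)
    rwa [Nat.add_sub_cancel' ht] at this
  set K := (k : ℝ) with hKdef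
  have hK : (2 : ℝ) ≤ K := by rw [hKdef]; exact_mod_cast hk
  have hK1 : 1 < K ^ 2 := by nlinarith
  have hD : 0 < K ^ (2 * (n + 1)) - 1 := by
    have : 1 < K ^ (2 * (n + 1)) := one_lt_pow₀ (by linarith) (by omega)
    linarith
  rw [div_le_iff₀ hD]
  have hsumR : ∑ t ∈ Finset.range (n + 1), (a t : ℝ) * K ^ t = (2 * K + 1) ^ n := by
    rw [hKdef]; exact_mod_cast hsum
  have hmain : (2 * K + 1) ^ n * K ^ n ≤ (a n : ℝ) * ∑ t ∈ Finset.range (n + 1), (K ^ 2) ^ t := by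
    rw [← hsumR, Finset.sum_mul, Finset.mul_sum]
    apply Finset.sum_le_sum
    intro t ht
    have htn : t ≤ n := Finset.mem_range_succ_iff.mp ht
    have h2R : K ^ (n - t) * (a t : ℝ) ≤ (a n : ℝ) := by rw [hKdef]; exact_mod_cast key2 t htn
    have hpow : K ^ t * K ^ n = K ^ (n - t) * (K ^ 2) ^ t := by
      rw [← pow_mul, ← pow_add, ← pow_add]; congr 1; omega
    calc (a t : ℝ) * K ^ t * K ^ n = (K ^ (n - t) * (a t : ℝ)) * (K ^ 2) ^ t := by
          rw [mul_assoc, hpow]; ring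
      _ ≤ (a n : ℝ) * (K ^ 2) ^ t :=
          mul_le_mul_of_nonneg_right h2R (by positivity)
  have hgeom : ∑ t ∈ Finset.range (n + 1), (K ^ 2) ^ t = ((K ^ 2) ^ (n + 1) - 1) / (K ^ 2 - 1) :=
    geom_sum_eq (ne_of_gt hK1) _
  rw [hgeom] at hmain
  have hpos : (0 : ℝ) < K ^ 2 - 1 := by linarith
  have hpw : (K ^ 2) ^ (n + 1) = K ^ (2 * (n + 1)) := by rw [← pow_mul]
  rw [hpw, ← mul_div_assoc] at hmain
  have := (le_div_iff₀ hpos).mp hmain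
  nlinarith [this]
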